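/- Let p be a prime and n ≥ 3 an integer with p < n. Then for every companion matrix C ∈ M_n(F_p) over the field F_p with p elements and for every polynomial g ∈ F_p[X] of degree at most n−2, there exist matrices E, M ∈ M_n(F_p) such that C = E + M, E is idempotent (E² = E), and the characteristic polynomial of M equals X^n + g. -/

import Mathlib

/-- The companion matrix `C_{c_0,...,c_{n-1}}`: entries `1` on the subdiagonal
(positions `(i+1, i)` for `1 ≤ i ≤ n-1`), last column `(-c_0, ..., -c_{n-1})ᵀ`,
and `0` elsewhere. -/
def companionMatrix {R : Type*} [Ring R] (n : ℕ) (c : Fin n → R) :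
    Matrix (Fin n) (Fin n) R :=
  Matrix.of fun i j =>
    if (i : ℕ) = (j : ℕ) + 1 then 1
    else if (j : ℕ) = n - 1 then -c i
    else 0

open Polynomial Matrix Finset

namespace S14

variable {F : Type*} [Field F]

noncomputable def fpoly (n : ℕ) (c : Fin n → F) : F[X] :=
  X ^ n + ∑ i : Fin n, C (c i) * X ^ (i : ℕ)

lemma fpoly_coeff_lt {n : ℕ} (c : Fin n → F) (j : ℕ) (hj : j < n) :
    (fpoly n c).coeff j = c ⟨j, hj⟩ := by
  unfold fpoly
  rw [coeff_add, coeff_X_pow, if_neg (by omega), finset_sum_coeff]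
  rw [Finset.sum_eq_single ⟨j, hj⟩]
  · simp
  · intro b _ hb
    rw [coeff_C_mul, coeff_X_pow, if_neg (by
      intro h; exact hb (by apply Fin.ext; simpa using h.symm)), mul_zero]
  · simp

lemma fpoly_coeff_n {n : ℕ} (c : Fin n → F) : (fpoly n c).coeff n = 1 := by
  unfold fpoly
  rw [coeff_add, coeff_X_pow, if_pos rfl, finset_sum_coeff]
  rw [Finset.sum_eq_zero, add_zero]
  intro i _
  rw [coeff_C_mul, coeff_X_pow, if_neg (by have := i.2; omega), mul_zero]

lemma fpoly_degree {n : ℕ} (c : Fin n → F) : (fpoly n c).degree ≤ (n : ℕ) := by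
  unfold fpoly
  refine (degree_add_le _ _).trans (max_le (degree_X_pow_le n) ?_)
  refine (degree_sum_le _ _).trans ?_
  refine Finset.sup_le fun i _ => ?_
  refine degree_le_natDegree.trans ?_
  have h := (natDegree_C_mul_le (c i) (X ^ (i:ℕ))).trans (natDegree_X_pow_le _)
  exact Nat.cast_le.mpr (h.trans (by have := i.2; omega))

noncomputable def Gs (n r : ℕ) (g : F[X]) (s : ℕ) : F[X] :=
  X ^ (n - 1 - r - s) + ∑ i ∈ Finset.Ico (r + s + 1) (n - 1), C (g.coeff i) * X ^ (i - 1 - r - s)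

lemma Gs_sum_degree {n r : ℕ} (g : F[X]) (s : ℕ) (hs : s < n - 1 - r) :
    (∑ i ∈ Finset.Ico (r + s + 1) (n - 1), C (g.coeff i) * X ^ (i - 1 - r - s) : F[X]).degree
      < ((n - 1 - r - s : ℕ) : WithBot ℕ) := by
  refine lt_of_le_of_lt (degree_sum_le _ _) ?_
  rw [Finset.sup_lt_iff (by exact_mod_cast WithBot.bot_lt_coe _)]
  intro i hi
  simp only [Finset.mem_Ico] at hi
  have h1 := (natDegree_C_mul_le (g.coeff i) (X ^ (i - 1 - r - s))).trans (natDegree_X_pow_le _)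
  exact lt_of_le_of_lt (degree_le_natDegree.trans (Nat.cast_le.mpr h1))
    (Nat.cast_lt.mpr (by omega))

lemma Gs_degree {n r : ℕ} (g : F[X]) (s : ℕ) (hs : s < n - 1 - r) :
    (Gs n r g s).degree = ((n - 1 - r - s : ℕ) : WithBot ℕ) := by
  unfold Gs
  rw [degree_add_eq_left_of_degree_lt, degree_X_pow]
  rw [degree_X_pow]
  exact Gs_sum_degree g s hs

lemma Gs_monic {n r : ℕ} (g : F[X]) (s : ℕ) (hs : s < n - 1 - r) :
    (Gs n r g s).Monic := by
  unfold Gs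
  exact monic_X_pow_add (Gs_sum_degree g s hs)

lemma Gs_natDegree {n r : ℕ} (g : F[X]) (s : ℕ) (hs : s < n - 1 - r) :
    (Gs n r g s).natDegree = n - 1 - r - s :=
  natDegree_eq_of_degree_eq_some (Gs_degree g s hs)

noncomputable def Abar (n r : ℕ) (c : Fin n → F) (g : F[X]) : F[X] :=
  (X ^ (n - r) * (X - C 1) ^ r - fpoly n c)
    + ((∑ j ∈ Finset.range r, C (g.coeff j) * (X - C 1) ^ j)
      + ∑ j ∈ Finset.Ico r (n - 1), C (g.coeff j) * (X ^ (j - r) * (X - C 1) ^ r))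

lemma Abar_degree {n r : ℕ} (c : Fin n → F) (g : F[X]) (hr1 : 1 ≤ r) (hrn : r ≤ n - 1)
    (hn : 2 ≤ n) (htr : (r : F) = - c ⟨n - 1, by omega⟩) :
    (Abar n r c g).degree < ((n - 1 : ℕ) : WithBot ℕ) := by
  have hmainmonic : (X ^ (n - r) * (X - C 1) ^ r : F[X]).Monic :=
    (monic_X_pow _).mul ((monic_X_sub_C 1).pow r)
  have hmainnd : (X ^ (n - r) * (X - C 1) ^ r : F[X]).natDegree = n := by
    rw [(monic_X_pow _).natDegree_mul ((monic_X_sub_C 1).pow r), natDegree_X_pow,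
      natDegree_pow, natDegree_X_sub_C]
    omega
  have habar : ∀ m : ℕ, n - 2 < m → (Abar n r c g).coeff m = 0 := by
    intro m hm
    unfold Abar
    rw [coeff_add, coeff_add, coeff_sub]
    have hs1 : (∑ j ∈ Finset.range r, C (g.coeff j) * (X - C 1) ^ j).coeff m = 0 := by
      rw [finset_sum_coeff]
      refine Finset.sum_eq_zero fun j hj => ?_
      simp only [Finset.mem_range] at hj
      apply coeff_eq_zero_of_natDegree_lt
      refine lt_of_le_of_lt ((natDegree_C_mul_le _ _).trans ?_) (show j < m by omega)
      rw [natDegree_pow, natDegree_X_sub_C]; omega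
    have hs2 : (∑ j ∈ Finset.Ico r (n-1), C (g.coeff j) * (X ^ (j - r) * (X - C 1) ^ r)).coeff m
        = 0 := by
      rw [finset_sum_coeff]
      refine Finset.sum_eq_zero fun j hj => ?_
      simp only [Finset.mem_Ico] at hj
      apply coeff_eq_zero_of_natDegree_lt
      refine lt_of_le_of_lt ((natDegree_C_mul_le _ _).trans ?_) (show j < m by omega)
      rw [(monic_X_pow _).natDegree_mul ((monic_X_sub_C 1).pow r), natDegree_X_pow,
        natDegree_pow, natDegree_X_sub_C]; omega
    rw [hs1, hs2]
    rcases lt_trichotomy m n with hmn | hmn | hmn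
    · have hmeq : m = n - 1 := by omega
      subst hmeq
      have hc1 : (X ^ (n - r) * (X - C 1) ^ r : F[X]).coeff (n - 1) = - (r : F) := by
        have hrw : n - 1 = (r - 1) + (n - r) := by omega
        rw [hrw, coeff_X_pow_mul]
        have hx : (X - C 1 : F[X]) = X + C (-1) := by rw [map_neg]; ring
        rw [hx, coeff_X_add_C_pow]
        have h1 : r - (r - 1) = 1 := by omega
        have h2 : r.choose (r - 1) = r := by
          rw [← Nat.choose_symm (by omega : r - 1 ≤ r), h1, Nat.choose_one_right]
        rw [h1, h2, pow_one]
        ring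
      rw [hc1, fpoly_coeff_lt c (n-1) (by omega), htr]
      ring
    · have hc3 : (X ^ (n - r) * (X - C 1) ^ r : F[X]).coeff m = 1 := by
        have h := hmainmonic.coeff_natDegree
        rw [hmainnd] at h
        rw [hmn]; exact h
      have hc4 : (fpoly n c).coeff m = 1 := by rw [hmn]; exact fpoly_coeff_n c
      rw [hc3, hc4]
      ring
    · have h1 : (X ^ (n - r) * (X - C 1) ^ r : F[X]).coeff m = 0 :=
        coeff_eq_zero_of_natDegree_lt (by omega)
      have h2 : (fpoly n c).coeff m = 0 := by
        apply coeff_eq_zero_of_degree_lt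
        exact lt_of_le_of_lt (fpoly_degree c) (Nat.cast_lt.mpr hmn)
      rw [h1, h2]; ring
  have hle : (Abar n r c g).degree ≤ ((n - 2 : ℕ) : WithBot ℕ) := by
    rw [degree_le_iff_coeff_zero]
    intro m hm
    exact habar m (by exact_mod_cast hm)
  exact lt_of_le_of_lt hle (Nat.cast_lt.mpr (by omega))


noncomputable def Rq (n r : ℕ) (c : Fin n → F) (g : F[X]) : ℕ → F[X]
  | 0 => Abar n r c g
  | s + 1 => Rq n r c g s %ₘ Gs n r g s

noncomputable def piq (n r : ℕ) (c : Fin n → F) (g : F[X]) (s : ℕ) : F[X] :=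
  Rq n r c g s /ₘ Gs n r g s

noncomputable def Pq (n r : ℕ) (c : Fin n → F) (g : F[X]) : ℕ → F[X]
  | 0 => 1
  | k + 1 => if k < r then (X - C 1) * Pq n r c g k
             else X * Pq n r c g k - piq n r c g (k - r)

section noHyp
variable {n r : ℕ} {c : Fin n → F} {g : F[X]}

lemma Rq_tele : ∀ m, m ≤ n - 1 - r →
    Abar n r c g = Rq n r c g m + ∑ s ∈ Finset.range m, Gs n r g s * piq n r c g s := by
  intro m
  induction m with
  | zero => intro _; simp [Rq]
  | succ m ih =>
    intro hm
    rw [Finset.sum_range_succ, ih (by omega)]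
    have : Rq n r c g (m+1) = Rq n r c g m - Gs n r g m * piq n r c g m := by
      show Rq n r c g m %ₘ Gs n r g m = _
      rw [modByMonic_eq_sub_mul_div _ (Gs n r g m)]
      rfl
    rw [this]; ring


lemma Pq_small : ∀ k, k ≤ r → Pq n r c g k = (X - C 1) ^ k := by
  intro k
  induction k with
  | zero => intro _; simp [Pq]
  | succ k ih =>
    intro hk
    show (if k < r then (X - C 1) * Pq n r c g k else _) = _
    rw [if_pos (by omega), ih (by omega), pow_succ]
    ring


lemma Pq_succ_ge : ∀ k, r ≤ k → Pq n r c g (k+1) = X * Pq n r c g k - piq n r c g (k - r) := by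
  intro k hk
  show (if k < r then _ else X * Pq n r c g k - piq n r c g (k - r)) = _
  rw [if_neg (by omega)]


end noHyp

section degreeLemmas
variable {n r : ℕ} {c : Fin n → F} {g : F[X]} (hr1 : 1 ≤ r) (hrn : r ≤ n - 1) (hn : 2 ≤ n)
  (htr : (r : F) = - c ⟨n - 1, by omega⟩)

include hr1 hrn hn htr

lemma Rq_deg : ∀ s, s ≤ n - 1 - r → (Rq n r c g s).degree < ((n - 1 - s : ℕ) : WithBot ℕ) := by
  intro s
  induction s with
  | zero => intro _; exact Abar_degree c g hr1 hrn hn htr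
  | succ s ih =>
    intro hs
    show (Rq n r c g s %ₘ Gs n r g s).degree < _
    refine lt_of_lt_of_le (lt_of_lt_of_le (degree_modByMonic_lt _ (Gs_monic g s (by omega)))
      (le_of_eq (Gs_degree g s (by omega)))) ?_
    exact Nat.cast_le.mpr (by omega)

lemma piq_deg : ∀ s, s < n - 1 - r → (piq n r c g s).degree < ((r : ℕ) : WithBot ℕ) := by
  intro s hs
  by_cases h0 : Rq n r c g s = 0
  · unfold piq; rw [h0, zero_divByMonic, degree_zero]
    exact_mod_cast WithBot.bot_lt_coe _
  · have hR := Rq_deg (g := g) hr1 hrn hn htr s (by omega)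
    have hRnat : (Rq n r c g s).natDegree < n - 1 - s := (natDegree_lt_iff_degree_lt h0).mpr hR
    have hpin : (piq n r c g s).natDegree = (Rq n r c g s).natDegree - (Gs n r g s).natDegree :=
      natDegree_divByMonic _ (Gs_monic g s hs)
    rw [Gs_natDegree g s hs] at hpin
    have : (piq n r c g s).natDegree < r := by omega
    exact lt_of_le_of_lt degree_le_natDegree (Nat.cast_lt.mpr this)

lemma piq_coeff : ∀ s, s < n - 1 - r → ∀ j, r ≤ j → (piq n r c g s).coeff j = 0 := by
  intro s hs j hj
  apply coeff_eq_zero_of_degree_lt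
  exact lt_of_lt_of_le (piq_deg (g := g) hr1 hrn hn htr s hs) (Nat.cast_le.mpr hj)

lemma Rq_final_coeff : ∀ j, r ≤ j → (Rq n r c g (n - 1 - r)).coeff j = 0 := by
  intro j hj
  apply coeff_eq_zero_of_degree_lt
  have := Rq_deg (g := g) hr1 hrn hn htr (n - 1 - r) le_rfl
  refine lt_of_lt_of_le this ?_
  exact Nat.cast_le.mpr (by omega)

lemma Pq_monic : ∀ k, k ≤ n - 1 → (Pq n r c g k).Monic ∧ (Pq n r c g k).natDegree = k := by
  intro k
  induction k with
  | zero => intro _; exact ⟨monic_one, natDegree_one⟩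
  | succ k ih =>
    intro hk
    obtain ⟨ihm, ihd⟩ := ih (by omega)
    by_cases hkr : k < r
    · have he : Pq n r c g (k+1) = (X - C 1) * Pq n r c g k := by
        show (if k < r then _ else _) = _
        rw [if_pos hkr]
      constructor
      · rw [he]; exact (monic_X_sub_C 1).mul ihm
      · rw [he, (monic_X_sub_C 1).natDegree_mul ihm, natDegree_X_sub_C, ihd]; omega
    · have he := Pq_succ_ge (n := n) (c := c) (g := g) k (le_of_not_gt hkr)
      have hXP : (X * Pq n r c g k).Monic := monic_X.mul ihm
      have hXPd : (X * Pq n r c g k).degree = ((k+1 : ℕ) : WithBot ℕ) := by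
        rw [degree_eq_natDegree hXP.ne_zero, monic_X.natDegree_mul ihm, natDegree_X, ihd]
        push_cast; ring
      have hpis : (piq n r c g (k - r)).degree < ((k+1 : ℕ) : WithBot ℕ) := by
        refine lt_of_lt_of_le (piq_deg (g := g) hr1 hrn hn htr (k - r) (by omega)) ?_
        exact Nat.cast_le.mpr (by omega)
      constructor
      · rw [he, sub_eq_add_neg]
        refine hXP.add_of_left ?_
        rw [degree_neg, hXPd]; exact hpis
      · rw [he]
        have hdeg : (X * Pq n r c g k - piq n r c g (k - r)).degree
            = (X * Pq n r c g k).degree := by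
          apply degree_sub_eq_left_of_degree_lt
          rw [hXPd]; exact hpis
        have := hdeg.trans hXPd
        exact natDegree_eq_of_degree_eq_some this

end degreeLemmas

noncomputable def Lfun (n r : ℕ) (c : Fin n → F) (g : F[X]) (t : ℕ) : F[X] :=
  X ^ (n - t) * Pq n r c g t
  + (∑ i ∈ Finset.Ico r t, C (g.coeff i) * Pq n r c g i)
  + (∑ i ∈ Finset.Ico t (n - 1), C (g.coeff i) * (X ^ (i - t) * Pq n r c g t))
  - (∑ s ∈ Finset.Ico (t - r) (n - 1 - r), Gs n r g s * piq n r c g s)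

section Bsec
variable {n r : ℕ} {c : Fin n → F} {g : F[X]}

lemma L_step (hr1 : 1 ≤ r) (t : ℕ) (ht1 : r ≤ t) (ht2 : t + 1 ≤ n - 1) :
    Lfun n r c g (t + 1) = Lfun n r c g t := by
  have h1 := Pq_succ_ge (n := n) (c := c) (g := g) t ht1
  have hA : X ^ (n - (t+1)) * Pq n r c g (t+1)
      = X ^ (n - t) * Pq n r c g t - X ^ (n - 1 - t) * piq n r c g (t - r) := by
    rw [h1, mul_sub, ← mul_assoc, mul_comm (X ^ (n - (t+1))) X, ← pow_succ']
    have e1 : n - (t+1) + 1 = n - t := by omega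
    have e2 : n - (t+1) = n - 1 - t := by omega
    rw [e1, e2]
  have hB : (∑ i ∈ Finset.Ico r (t+1), C (g.coeff i) * Pq n r c g i)
      = (∑ i ∈ Finset.Ico r t, C (g.coeff i) * Pq n r c g i) + C (g.coeff t) * Pq n r c g t :=
    Finset.sum_Ico_succ_top ht1 _
  have hC : (∑ i ∈ Finset.Ico (t+1) (n - 1), C (g.coeff i) * (X ^ (i - (t+1)) * Pq n r c g (t+1)))
      = (∑ i ∈ Finset.Ico (t+1) (n - 1), C (g.coeff i) * (X ^ (i - t) * Pq n r c g t))
        - (∑ i ∈ Finset.Ico (t+1) (n - 1), C (g.coeff i) * X ^ (i - 1 - t)) * piq n r c g (t - r) := by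
    rw [Finset.sum_mul, ← Finset.sum_sub_distrib]
    refine Finset.sum_congr rfl fun i hi => ?_
    simp only [Finset.mem_Ico] at hi
    rw [h1, mul_sub]
    have e1 : (X : F[X]) ^ (i - (t+1)) * (X * Pq n r c g t) = X ^ (i - t) * Pq n r c g t := by
      rw [← mul_assoc, mul_comm (X ^ (i - (t+1))) X, ← pow_succ']
      congr 2
      omega
    have e2 : i - (t+1) = i - 1 - t := by omega
    rw [e1, e2, mul_sub]
    ring
  have hT3 : (∑ i ∈ Finset.Ico t (n - 1), C (g.coeff i) * (X ^ (i - t) * Pq n r c g t))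
      = C (g.coeff t) * Pq n r c g t
        + ∑ i ∈ Finset.Ico (t+1) (n - 1), C (g.coeff i) * (X ^ (i - t) * Pq n r c g t) := by
    rw [Finset.sum_eq_sum_Ico_succ_bot (show t < n - 1 by omega)]
    simp
  have hD : (∑ s ∈ Finset.Ico (t - r) (n - 1 - r), Gs n r g s * piq n r c g s)
      = Gs n r g (t - r) * piq n r c g (t - r)
        + ∑ s ∈ Finset.Ico (t - r + 1) (n - 1 - r), Gs n r g s * piq n r c g s := by
    rw [Finset.sum_eq_sum_Ico_succ_bot (show t - r < n - 1 - r by omega)]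
  have hGe : Gs n r g (t - r)
      = X ^ (n - 1 - t) + ∑ i ∈ Finset.Ico (t+1) (n - 1), C (g.coeff i) * X ^ (i - 1 - t) := by
    unfold Gs
    have e1 : n - 1 - r - (t - r) = n - 1 - t := by omega
    have e2 : r + (t - r) + 1 = t + 1 := by omega
    rw [e1, e2]
    refine congrArg _ (Finset.sum_congr rfl fun i _ => ?_)
    have e3 : i - 1 - r - (t - r) = i - 1 - t := by omega
    rw [e3]
  have hE : t + 1 - r = (t - r) + 1 := by omega
  unfold Lfun
  rw [hA, hB, hC, hT3, hD, hGe, hE]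
  ring

lemma L_const (hr1 : 1 ≤ r) : ∀ j, r + j ≤ n - 1 → Lfun n r c g (r + j) = Lfun n r c g r := by
  intro j
  induction j with
  | zero => intro _; rfl
  | succ j ih =>
    intro hj
    have : r + (j + 1) = (r + j) + 1 := by omega
    rw [this, L_step hr1 (r + j) (by omega) (by omega), ih (by omega)]

lemma B_eq (hr1 : 1 ≤ r) (hrn : r ≤ n - 1) (hn : 2 ≤ n) :
    X * Pq n r c g (n - 1) + (∑ i ∈ Finset.range (n - 1), C (g.coeff i) * Pq n r c g i)
      - fpoly n c = Rq n r c g (n - 1 - r) := by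
  have hL := L_const (n := n) (c := c) (g := g) hr1 (n - 1 - r) (by omega)
  have he : r + (n - 1 - r) = n - 1 := by omega
  rw [he] at hL
  have h1 : Lfun n r c g (n - 1)
      = X * Pq n r c g (n - 1) + ∑ i ∈ Finset.Ico r (n - 1), C (g.coeff i) * Pq n r c g i := by
    unfold Lfun
    rw [Finset.Ico_self, Finset.sum_empty, Finset.Ico_self, Finset.sum_empty]
    have e1 : n - (n - 1) = 1 := by omega
    rw [e1, pow_one]
    ring
  have h2 : Lfun n r c g r
      = X ^ (n - r) * (X - C 1) ^ r
        + (∑ i ∈ Finset.Ico r (n - 1), C (g.coeff i) * (X ^ (i - r) * (X - C 1) ^ r))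
        - ∑ s ∈ Finset.range (n - 1 - r), Gs n r g s * piq n r c g s := by
    unfold Lfun
    rw [Finset.Ico_self, Finset.sum_empty, Nat.sub_self, Finset.range_eq_Ico,
      Pq_small r le_rfl]
    ring
  have hsplit : (∑ i ∈ Finset.range (n - 1), C (g.coeff i) * Pq n r c g i)
      = (∑ i ∈ Finset.range r, C (g.coeff i) * (X - C 1) ^ i)
        + ∑ i ∈ Finset.Ico r (n - 1), C (g.coeff i) * Pq n r c g i := by
    rw [Finset.range_eq_Ico, ← Finset.sum_Ico_consecutive _ (Nat.zero_le r) hrn,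
      ← Finset.range_eq_Ico]
    congr 1
    refine Finset.sum_congr rfl fun i hi => ?_
    simp only [Finset.mem_range] at hi
    rw [Pq_small i (by omega)]
  have htele := Rq_tele (n := n) (r := r) (c := c) (g := g) (n - 1 - r) le_rfl
  have : X * Pq n r c g (n - 1) + (∑ i ∈ Finset.range (n - 1), C (g.coeff i) * Pq n r c g i)
      - fpoly n c
      = Lfun n r c g (n - 1) + (∑ i ∈ Finset.range r, C (g.coeff i) * (X - C 1) ^ i)
        - fpoly n c := by
    rw [h1, hsplit]; ring
  rw [this, hL, h2]
  unfold Abar at htele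
  -- htele : main + sums = Rq + ΣGπ
  have := htele
  linear_combination htele

end Bsec

section MatrixSec
variable {n r : ℕ} {c : Fin n → F} {g : F[X]}

lemma coeff_X_mul_nat (φ : F[X]) (i : ℕ) :
    (X * φ).coeff i = if i = 0 then 0 else φ.coeff (i - 1) := by
  cases i with
  | zero => simp [Polynomial.mul_coeff_zero]
  | succ m => rw [Polynomial.coeff_X_mul]; simp

lemma companion_mul_apply (c' : Fin n → F) (A : Matrix (Fin n) (Fin n) F) (i k : Fin n) :
    (companionMatrix n c' * A) i k
      = (if (i : ℕ) = 0 then 0 else A ⟨(i : ℕ) - 1, by have := i.2; omega⟩ k)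
        - c' i * A ⟨n - 1, by have := i.2; omega⟩ k := by
  rw [Matrix.mul_apply]
  have hsummand : ∀ j : Fin n, companionMatrix n c' i j * A j k
      = (if (i : ℕ) = (j : ℕ) + 1 then A j k else 0)
        + (if (j : ℕ) = n - 1 then -(c' i * A j k) else 0) := by
    intro j
    show (if (i:ℕ) = (j:ℕ)+1 then (1:F) else if (j:ℕ) = n-1 then -c' i else 0) * A j k = _
    split_ifs with h1 h2
    · exfalso; have := i.2; have := j.2; omega
    · ring
    · ring
    · ring
  rw [Finset.sum_congr rfl fun j _ => hsummand j, Finset.sum_add_distrib]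
  have e1 : (∑ j : Fin n, if (i : ℕ) = (j : ℕ) + 1 then A j k else 0)
      = (if (i : ℕ) = 0 then 0 else A ⟨(i : ℕ) - 1, by have := i.2; omega⟩ k) := by
    by_cases hi : (i : ℕ) = 0
    · rw [if_pos hi]
      exact Finset.sum_eq_zero fun j _ => if_neg (by omega)
    · rw [if_neg hi]
      rw [Finset.sum_eq_single (⟨(i:ℕ) - 1, by have := i.2; omega⟩ : Fin n)]
      · rw [if_pos (by simp; omega)]
      · intro j _ hj
        refine if_neg fun hcon => hj (Fin.ext (by simp; omega))
      · intro habs; exact absurd (Finset.mem_univ _) habs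
  have e2 : (∑ j : Fin n, if (j : ℕ) = n - 1 then -(c' i * A j k) else 0)
      = -(c' i * A ⟨n - 1, by have := i.2; omega⟩ k) := by
    rw [Finset.sum_eq_single (⟨n - 1, by have := i.2; omega⟩ : Fin n)]
    · rw [if_pos (by simp)]
    · intro j _ hj
      refine if_neg fun hcon => hj (Fin.ext (by simp; omega))
    · intro habs; exact absurd (Finset.mem_univ _) habs
  rw [e1, e2]
  ring

noncomputable def Umat (n r : ℕ) (c : Fin n → F) (g : F[X]) : Matrix (Fin n) (Fin n) F :=
  Matrix.of fun i k : Fin n => (Pq n r c g (k : ℕ)).coeff (i : ℕ)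

noncomputable def CqM (n : ℕ) (g : F[X]) : Matrix (Fin n) (Fin n) F :=
  companionMatrix n fun i : Fin n => g.coeff (i : ℕ)

noncomputable def Dmat (n r : ℕ) (c : Fin n → F) (g : F[X]) : Matrix (Fin n) (Fin n) F :=
  companionMatrix n c * Umat n r c g - Umat n r c g * CqM n g

lemma CU_apply (i k : Fin n) :
    (companionMatrix n c * Umat n r c g) i k
      = (X * Pq n r c g (k : ℕ)).coeff (i : ℕ) - c i * (Pq n r c g (k : ℕ)).coeff (n - 1) := by
  rw [companion_mul_apply c (Umat n r c g) i k, coeff_X_mul_nat]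
  simp [Umat]

lemma UCq_apply_lt (i k : Fin n) (hk : (k : ℕ) < n - 1) :
    (Umat n r c g * CqM n g) i k = (Pq n r c g ((k : ℕ) + 1)).coeff (i : ℕ) := by
  rw [Matrix.mul_apply]
  rw [Finset.sum_eq_single (⟨(k : ℕ) + 1, by omega⟩ : Fin n)]
  · show (Pq n r c g (((⟨(k : ℕ) + 1, by omega⟩ : Fin n) : ℕ))).coeff (i:ℕ) * _ = _
    have : CqM n g (⟨(k : ℕ) + 1, by omega⟩ : Fin n) k = 1 := by
      show (if ((k:ℕ)+1 : ℕ) = (k:ℕ)+1 then (1:F) else _) = 1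
      rw [if_pos rfl]
    rw [this, mul_one]
  · intro j _ hj
    have : CqM n g j k = 0 := by
      show (if (j:ℕ) = (k:ℕ)+1 then (1:F) else if (k:ℕ) = n-1 then _ else 0) = 0
      rw [if_neg (fun hcon => hj (Fin.ext (by simp; omega))), if_neg (by omega)]
    rw [this, mul_zero]
  · intro habs; exact absurd (Finset.mem_univ _) habs

lemma UCq_apply_last (i k : Fin n) (hk : (k : ℕ) = n - 1) :
    (Umat n r c g * CqM n g) i k
      = -((∑ j ∈ Finset.range n, C (g.coeff j) * Pq n r c g j).coeff (i : ℕ)) := by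
  rw [Matrix.mul_apply]
  have hterm : ∀ j : Fin n, Umat n r c g i j * CqM n g j k
      = -(g.coeff (j : ℕ) * (Pq n r c g (j : ℕ)).coeff (i : ℕ)) := by
    intro j
    show (Pq n r c g (j:ℕ)).coeff (i:ℕ)
        * (if (j:ℕ) = (k:ℕ)+1 then (1:F) else if (k:ℕ) = n-1 then -g.coeff (j:ℕ) else 0) = _
    rw [if_neg (by have := j.2; omega), if_pos hk]
    ring
  rw [Finset.sum_congr rfl fun j _ => hterm j]
  rw [Finset.sum_neg_distrib]
  congr 1
  rw [finset_sum_coeff]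
  rw [← Fin.sum_univ_eq_sum_range (fun m => (C (g.coeff m) * Pq n r c g m).coeff (i : ℕ)) n]
  exact Finset.sum_congr rfl fun j _ => by rw [coeff_C_mul]

section withHyp
variable (hr1 : 1 ≤ r) (hrn : r ≤ n - 1) (hn : 2 ≤ n)
  (htr : (r : F) = - c ⟨n - 1, by omega⟩)
include hr1 hrn hn htr

lemma Dcol_lt (i k : Fin n) (hk : (k : ℕ) < r) :
    Dmat n r c g i k = Umat n r c g i k := by
  have hPk := Pq_monic (g := g) hr1 hrn hn htr (k : ℕ) (by omega)
  have hc0 : (Pq n r c g (k : ℕ)).coeff (n - 1) = 0 :=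
    coeff_eq_zero_of_natDegree_lt (by omega)
  have hP1 : Pq n r c g ((k : ℕ) + 1) = (X - C 1) * Pq n r c g (k : ℕ) := by
    show (if (k:ℕ) < r then _ else _) = _
    rw [if_pos hk]
  rw [Dmat, Matrix.sub_apply, CU_apply, UCq_apply_lt i k (by omega), hc0, mul_zero, sub_zero,
    hP1, ← coeff_sub]
  have : X * Pq n r c g (k : ℕ) - (X - C 1) * Pq n r c g (k : ℕ) = Pq n r c g (k : ℕ) := by
    rw [Polynomial.C_1]; ring
  rw [this]
  rfl

lemma Dcol_mid (i k : Fin n) (hk1 : r ≤ (k : ℕ)) (hk2 : (k : ℕ) < n - 1) :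
    Dmat n r c g i k = (piq n r c g ((k : ℕ) - r)).coeff (i : ℕ) := by
  have hPk := Pq_monic (g := g) hr1 hrn hn htr (k : ℕ) (by omega)
  have hc0 : (Pq n r c g (k : ℕ)).coeff (n - 1) = 0 :=
    coeff_eq_zero_of_natDegree_lt (by omega)
  have hP1 := Pq_succ_ge (n := n) (c := c) (g := g) (k : ℕ) hk1
  rw [Dmat, Matrix.sub_apply, CU_apply, UCq_apply_lt i k hk2, hc0, mul_zero, sub_zero,
    hP1, ← coeff_sub]
  congr 1
  ring

lemma Dcol_last (hgc : g.coeff (n - 1) = 0) (i k : Fin n) (hk : (k : ℕ) = n - 1) :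
    Dmat n r c g i k = (Rq n r c g (n - 1 - r)).coeff (i : ℕ) := by
  have hPk := Pq_monic (g := g) hr1 hrn hn htr (n - 1) (by omega)
  have hc1 : (Pq n r c g (n - 1)).coeff (n - 1) = 1 := by
    have := hPk.1.coeff_natDegree
    rwa [hPk.2] at this
  have hci : c i = (fpoly n c).coeff (i : ℕ) := by
    rw [fpoly_coeff_lt c (i : ℕ) i.2]
  have hsum : (∑ j ∈ Finset.range n, C (g.coeff j) * Pq n r c g j)
      = ∑ j ∈ Finset.range (n - 1), C (g.coeff j) * Pq n r c g j := by
    have e : Finset.range n = Finset.range ((n - 1) + 1) := by congr 1; omega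
    rw [e, Finset.sum_range_succ, hgc, map_zero, zero_mul, add_zero]
  rw [Dmat, Matrix.sub_apply, CU_apply, UCq_apply_last i k hk, hk, hc1, mul_one, hci, hsum]
  have hB := B_eq (n := n) (r := r) (c := c) (g := g) hr1 hrn hn
  have := congrArg (fun φ : F[X] => φ.coeff (i : ℕ)) hB
  simp only [coeff_add, coeff_sub] at this
  linear_combination this

lemma Dcol_zero (hgc : g.coeff (n - 1) = 0) (i k : Fin n) (hi : r ≤ (i : ℕ))
    (hk : r ≤ (k : ℕ)) : Dmat n r c g i k = 0 := by
  by_cases hk2 : (k : ℕ) < n - 1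
  · rw [Dcol_mid hr1 hrn hn htr i k hk hk2]
    exact piq_coeff (g := g) hr1 hrn hn htr _ (by omega) _ hi
  · rw [Dcol_last hr1 hrn hn htr hgc i k (by have := k.2; omega)]
    exact Rq_final_coeff (g := g) hr1 hrn hn htr _ hi

end withHyp
end MatrixSec


section CharSec
variable {n : ℕ}

lemma charpoly_conj (U A V : Matrix (Fin n) (Fin n) F) (hUV : U * V = 1) :
    (U * A * V).charpoly = A.charpoly := by
  have hmapUV : U.map (Polynomial.C : F →+* F[X]) * V.map Polynomial.C = 1 := by
    rw [← Matrix.map_mul, hUV]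
    exact Matrix.map_one _ (map_zero _) (map_one _)
  have hch : Matrix.charmatrix (U * A * V)
      = U.map Polynomial.C * Matrix.charmatrix A * V.map Polynomial.C := by
    unfold Matrix.charmatrix
    rw [Matrix.mul_sub, Matrix.sub_mul]
    congr 1
    · have hcomm := Matrix.scalar_commute (n := Fin n) (X : F[X])
        (fun r' => Commute.all X r') (U.map Polynomial.C)
      rw [← hcomm.eq, Matrix.mul_assoc, hmapUV, Matrix.mul_one]
    · simp only [RingHom.mapMatrix_apply]
      rw [Matrix.map_mul, Matrix.map_mul]
  unfold Matrix.charpoly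
  rw [hch, Matrix.det_mul, Matrix.det_mul]
  have hdet1 : (U.map (Polynomial.C : F →+* F[X])).det * (V.map Polynomial.C).det = 1 := by
    rw [← Matrix.det_mul, hmapUV, Matrix.det_one]
  rw [mul_right_comm, hdet1, one_mul]

/-- standard basis vector -/
def st (n : ℕ) (m : ℕ) : Fin n → F := fun j => if (j : ℕ) = m then 1 else 0

lemma mulVec_st (A : Matrix (Fin n) (Fin n) F) (m : ℕ) (hm : m < n) :
    A *ᵥ st n m = fun i => A i ⟨m, hm⟩ := by
  funext i
  show ∑ j, A i j * (if (j : ℕ) = m then 1 else 0) = _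
  rw [Finset.sum_eq_single (⟨m, hm⟩ : Fin n)]
  · rw [if_pos rfl, mul_one]
  · intro j _ hj
    rw [if_neg (fun hcon => hj (Fin.ext (by simp; omega))), mul_zero]
  · intro habs; exact absurd (Finset.mem_univ _) habs

lemma sum_mulVec {ι : Type*} (s : Finset ι) (A : ι → Matrix (Fin n) (Fin n) F)
    (v : Fin n → F) : (∑ m ∈ s, A m) *ᵥ v = ∑ m ∈ s, (A m) *ᵥ v := by
  funext i
  simp only [Matrix.mulVec, dotProduct, Finset.sum_apply, Matrix.sum_apply, Finset.sum_mul]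
  rw [Finset.sum_comm]

lemma CqM_pow_mulVec (g : F[X]) (hn : 1 ≤ n) :
    ∀ m, m < n → (CqM n g ^ m) *ᵥ st n 0 = st n m := by
  intro m
  induction m with
  | zero => intro _; rw [pow_zero, Matrix.one_mulVec]
  | succ m ih =>
    intro hm
    rw [pow_succ', ← Matrix.mulVec_mulVec, ih (by omega), mulVec_st _ m (by omega)]
    funext i
    show CqM n g i ⟨m, by omega⟩ = st n (m+1) i
    show (if (i:ℕ) = m + 1 then (1:F) else if (m : ℕ) = n - 1 then -g.coeff (i:ℕ) else 0) = _
    unfold st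
    split_ifs <;> first | rfl | omega

lemma charpoly_CqM (g : F[X]) (hn : 2 ≤ n) (hgdeg : g.degree ≤ ((n - 2 : ℕ) : WithBot ℕ)) :
    (CqM n g).charpoly = X ^ n + g := by
  have hgdlt : g.degree < ((n : ℕ) : WithBot ℕ) :=
    lt_of_le_of_lt hgdeg (Nat.cast_lt.mpr (by omega))
  have hgnat : g.natDegree < n := by
    by_cases h0 : g = 0
    · rw [h0, natDegree_zero]; omega
    · exact (natDegree_lt_iff_degree_lt h0).mpr hgdlt
  have hqm : (X ^ n + g : F[X]).Monic := monic_X_pow_add hgdlt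
  have hqd : (X ^ n + g : F[X]).degree = n := by
    rw [degree_add_eq_left_of_degree_lt (by rwa [degree_X_pow]), degree_X_pow]
  have haevalvec : ∀ d : F[X], d.natDegree < n →
      (Polynomial.aeval (CqM n g) d) *ᵥ st n 0 = fun i : Fin n => d.coeff (i : ℕ) := by
    intro d hd
    rw [Polynomial.aeval_eq_sum_range' hd, sum_mulVec]
    funext i
    rw [Finset.sum_apply]
    have hterm : ∀ m ∈ Finset.range n,
        ((d.coeff m • CqM n g ^ m) *ᵥ st n 0) i = d.coeff m * st n m i := by
      intro m hm
      simp only [Finset.mem_range] at hm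
      rw [Matrix.smul_mulVec, CqM_pow_mulVec g (by omega) m hm]
      simp [smul_eq_mul]
    rw [Finset.sum_congr rfl hterm]
    rw [Finset.sum_eq_single (i : ℕ)]
    · unfold st; rw [if_pos rfl, mul_one]
    · intro m _ hm
      unfold st; rw [if_neg (by omega), mul_zero]
    · intro habs; exact absurd (Finset.mem_range.mpr i.2) habs
  have hlast : (CqM n g) *ᵥ st n (n - 1) = fun i : Fin n => -g.coeff (i : ℕ) := by
    rw [mulVec_st _ (n - 1) (by omega)]
    funext i
    show (if (i:ℕ) = (n-1) + 1 then (1:F) else if ((n-1:ℕ)) = n - 1 then -g.coeff (i:ℕ) else 0)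
        = -g.coeff (i:ℕ)
    rw [if_neg (by have := i.2; omega), if_pos rfl]
  have hq0 : (Polynomial.aeval (CqM n g) (X ^ n + g)) *ᵥ st n 0 = 0 := by
    rw [map_add, Polynomial.aeval_X_pow, Matrix.add_mulVec]
    have hpown : (CqM n g) ^ n = CqM n g * CqM n g ^ (n - 1) := by
      rw [← pow_succ']; congr 1; omega
    rw [hpown, ← Matrix.mulVec_mulVec, CqM_pow_mulVec g (by omega) (n - 1) (by omega), hlast,
      haevalvec g hgnat]
    funext i
    simp
  by_cases hd0 : (CqM n g).charpoly - (X ^ n + g) = 0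
  · linear_combination (norm := abel) hd0
  · exfalso
    have hchd : (CqM n g).charpoly.degree = ((n : ℕ) : WithBot ℕ) := by
      rw [Matrix.charpoly_degree_eq_dim, Fintype.card_fin]
    have hdeg : ((CqM n g).charpoly - (X ^ n + g)).degree < ((n : ℕ) : WithBot ℕ) := by
      refine lt_of_lt_of_le (degree_sub_lt (hchd.trans hqd.symm)
        (Matrix.charpoly_monic _).ne_zero ?_) (le_of_eq hchd)
      rw [(Matrix.charpoly_monic _).leadingCoeff, hqm.leadingCoeff]
    have hdnat : ((CqM n g).charpoly - (X ^ n + g)).natDegree < n :=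
      (natDegree_lt_iff_degree_lt hd0).mpr hdeg
    have hvec := haevalvec _ hdnat
    rw [map_sub, Matrix.sub_mulVec, Matrix.aeval_self_charpoly, Matrix.zero_mulVec, hq0,
      sub_zero] at hvec
    have hcoeffs : ∀ i : Fin n, ((CqM n g).charpoly - (X ^ n + g)).coeff (i : ℕ) = 0 := by
      intro i
      have := congrFun hvec i
      simpa using this.symm
    apply hd0
    ext m
    rw [coeff_zero]
    by_cases hmn : m < n
    · exact hcoeffs ⟨m, hmn⟩
    · exact coeff_eq_zero_of_degree_lt
        (lt_of_lt_of_le hdeg (Nat.cast_le.mpr (by omega)))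
end CharSec

theorem decomp {n r : ℕ} (hr1 : 1 ≤ r) (hrn : r ≤ n - 1) (hn : 2 ≤ n) (c : Fin n → F)
    (g : F[X]) (htr : (r : F) = - c ⟨n - 1, by omega⟩)
    (hg : g.degree ≤ ((n - 2 : ℕ) : WithBot ℕ)) :
    ∃ E M : Matrix (Fin n) (Fin n) F,
      companionMatrix n c = E + M ∧ E ^ 2 = E ∧ M.charpoly = X ^ n + g := by
  have hgc : g.coeff (n - 1) = 0 :=
    coeff_eq_zero_of_degree_lt (lt_of_le_of_lt hg (Nat.cast_lt.mpr (by omega)))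
  set U := Umat n r c g with hUdef
  have hUtri : U.BlockTriangular id := by
    intro i j hij
    have hPj := Pq_monic (g := g) hr1 hrn hn htr (j : ℕ) (by have := j.2; omega)
    exact coeff_eq_zero_of_natDegree_lt (by rw [hPj.2]; exact hij)
  have hdet : U.det = 1 := by
    rw [Matrix.det_of_upperTriangular hUtri]
    refine Finset.prod_eq_one fun i _ => ?_
    have hPi := Pq_monic (g := g) hr1 hrn hn htr (i : ℕ) (by have := i.2; omega)
    show (Pq n r c g (i : ℕ)).coeff (i : ℕ) = 1
    have hcn := hPi.1.coeff_natDegree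
    rw [hPi.2] at hcn
    exact hcn
  have hunit : IsUnit U.det := by rw [hdet]; exact isUnit_one
  haveI : Invertible U := U.invertibleOfIsUnitDet hunit
  set V := U⁻¹ with hVdef
  have hUV : U * V = 1 := Matrix.mul_nonsing_inv U hunit
  have hVU : V * U = 1 := Matrix.nonsing_inv_mul U hunit
  have hVtri : V.BlockTriangular id := Matrix.blockTriangular_inv_of_blockTriangular hUtri
  set D := Dmat n r c g with hDdef
  have hDlt : ∀ i k : Fin n, (k : ℕ) < r → D i k = U i k :=
    fun i k hk => Dcol_lt hr1 hrn hn htr i k hk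
  have hDz : ∀ i k : Fin n, r ≤ (i : ℕ) → r ≤ (k : ℕ) → D i k = 0 :=
    fun i k hi hk => Dcol_zero hr1 hrn hn htr hgc i k hi hk
  set W := V * D with hWdef
  have hW1 : ∀ i k : Fin n, (k : ℕ) < r → W i k = (1 : Matrix (Fin n) (Fin n) F) i k := by
    intro i k hk
    show (V * D) i k = _
    rw [Matrix.mul_apply,
      Finset.sum_congr rfl fun j _ => by rw [hDlt j k hk],
      ← Matrix.mul_apply, hVU]
  have hW2 : ∀ i k : Fin n, r ≤ (i : ℕ) → r ≤ (k : ℕ) → W i k = 0 := by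
    intro i k hi hk
    show (V * D) i k = _
    rw [Matrix.mul_apply]
    refine Finset.sum_eq_zero fun j _ => ?_
    by_cases hj : (j : ℕ) < r
    · rw [hVtri (show (j : Fin n) < i from Fin.lt_def.mpr (by omega)), zero_mul]
    · rw [hDz j k (by omega) hk, mul_zero]
  have hDW : D * W = D := by
    ext i k
    rw [Matrix.mul_apply]
    by_cases hk : (k : ℕ) < r
    · rw [Finset.sum_congr rfl fun j _ => by rw [hW1 j k hk], ← Matrix.mul_apply,
        Matrix.mul_one]
    · have hterm : ∀ j : Fin n, D i j * W j k = U i j * W j k := by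
        intro j
        by_cases hj : (j : ℕ) < r
        · rw [hDlt i j hj]
        · rw [hW2 j k (by omega) (by omega), mul_zero, mul_zero]
      rw [Finset.sum_congr rfl fun j _ => hterm j, ← Matrix.mul_apply, hWdef,
        ← Matrix.mul_assoc, hUV, Matrix.one_mul]
  refine ⟨D * V, companionMatrix n c - D * V, by abel, ?_, ?_⟩
  · -- idempotent
    rw [pow_two]
    calc D * V * (D * V) = D * (V * D) * V := by
          rw [Matrix.mul_assoc D V (D * V), ← Matrix.mul_assoc V D V,
            ← Matrix.mul_assoc D (V * D) V]
      _ = D * V := by rw [← hWdef, hDW]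
  · -- charpoly
    have hMU : (companionMatrix n c - D * V) * U = U * CqM n g := by
      rw [Matrix.sub_mul, Matrix.mul_assoc D V U, hVU, Matrix.mul_one, hDdef]
      show companionMatrix n c * U - (companionMatrix n c * U - U * CqM n g) = _
      abel
    have hMconj : companionMatrix n c - D * V = U * CqM n g * V := by
      calc companionMatrix n c - D * V
          = (companionMatrix n c - D * V) * (U * V) := by rw [hUV, Matrix.mul_one]
        _ = U * CqM n g * V := by rw [← Matrix.mul_assoc, hMU]
    rw [hMconj, charpoly_conj U (CqM n g) V hUV, charpoly_CqM g hn hg]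

end S14

open Polynomial in
/-- For a prime `p` and `n ≥ 3` with `p < n`, every `n × n` companion matrix
`C` over `𝔽_p` decomposes as `C = E + M` with `E` idempotent and
`χ_M = X^n + g`, for any polynomial `g` of degree at most `n - 2`. -/
theorem stmt_14 {p : ℕ} [Fact p.Prime] (n : ℕ) (hn : 3 ≤ n) (hpn : p < n)
    (c : Fin n → ZMod p) (g : Polynomial (ZMod p))
    (hg : g.degree ≤ (n - 2 : ℕ)) :
    ∃ E M : Matrix (Fin n) (Fin n) (ZMod p),
      companionMatrix n c = E + M ∧
      E ^ 2 = E ∧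
      M.charpoly = Polynomial.X ^ n + g := by
  haveI : NeZero p := ⟨(Fact.out : p.Prime).ne_zero⟩
  have hp2 : 2 ≤ p := (Fact.out : p.Prime).two_le
  set a : ZMod p := -c ⟨n - 1, by omega⟩ with ha
  by_cases h0 : a.val = 0
  · have htr : ((p : ℕ) : ZMod p) = a := by
      rw [ZMod.natCast_self]
      have hz : a = 0 := by rwa [← ZMod.val_eq_zero]
      rw [hz]
    exact S14.decomp (show 1 ≤ p by omega) (show p ≤ n - 1 by omega)
      (show 2 ≤ n by omega) c g (by rw [htr]) hg
  · have hlt : a.val < p := ZMod.val_lt a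
    have htr : ((a.val : ℕ) : ZMod p) = a := ZMod.natCast_rightInverse a
    exact S14.decomp (show 1 ≤ a.val by omega) (show a.val ≤ n - 1 by omega)
      (show 2 ≤ n by omega) c g (by rw [htr]) hg
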